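/- Let P ∈ ℚ[t]. Then P preserves formal sums of signs if and only if the following three conditions hold: P takes integer values on all integers, ΔP preserves formal sums of signs, and ½Δ(ΔP) preserves formal sums of signs. -/

import Mathlib

open Polynomial

/-- A polynomial `P ∈ ℚ[t]` preserves formal sums of signs if for every `s ≥ 0` there is
a polynomial `Q` with integer coefficients in `s` variables such that
`P(X_1 + ⋯ + X_s) − Q` lies in the ideal generated by the `X_i^3 − X_i`. -/
def PreservesSumsOfSigns (P : Polynomial ℚ) : Prop :=
  ∀ s : ℕ, ∃ Q : MvPolynomial (Fin s) ℤ,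
    Polynomial.aeval (∑ i : Fin s, MvPolynomial.X i) P
        - MvPolynomial.map (Int.castRingHom ℚ) Q ∈
      Ideal.span (Set.range fun i : Fin s => MvPolynomial.X i ^ 3 - MvPolynomial.X i)

/-- The difference operator `ΔP(t) = P(t+1) − P(t)`. -/
noncomputable def deltaOp (P : Polynomial ℚ) : Polynomial ℚ :=
  P.comp (Polynomial.X + 1) - P

open LaurentPolynomial

noncomputable section SignsAux

/-- shift by `n` as a linear endomorphism of `ℚ[X]`. -/
def shiftHom : Multiplicative ℤ →* Module.End ℚ (Polynomial ℚ) where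
  toFun n := (Polynomial.aeval (Polynomial.X + Polynomial.C ((Multiplicative.toAdd n : ℤ) : ℚ))).toLinearMap
  map_one' := LinearMap.ext fun P => by
    simp [← Polynomial.comp_eq_aeval]
  map_mul' x y := LinearMap.ext fun P => by
    simp only [AlgHom.toLinearMap_apply, Module.End.mul_apply, ← Polynomial.comp_eq_aeval]
    rw [show (Multiplicative.toAdd (x*y) : ℤ) = Multiplicative.toAdd x + Multiplicative.toAdd y from rfl]
    rw [Polynomial.comp_assoc]
    congr 1
    push_cast
    simp [Polynomial.add_comp]
    ring

def Phi : LaurentPolynomial ℚ →ₐ[ℚ] Module.End ℚ (Polynomial ℚ) :=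
  AddMonoidAlgebra.lift ℚ _ ℤ shiftHom

lemma Phi_T (n : ℤ) (P : Polynomial ℚ) :
    Phi (T n) P = P.comp (X + Polynomial.C (n : ℚ)) := by
  rw [Phi, LaurentPolynomial.T]
  rw [AddMonoidAlgebra.lift_single]
  simp [shiftHom, ← Polynomial.comp_eq_aeval]

lemma Phi_one (P : Polynomial ℚ) : Phi 1 P = P := by simp

lemma Phi_mul (F G : LaurentPolynomial ℚ) (P : Polynomial ℚ) :
    Phi (F * G) P = Phi F (Phi G P) := by simp [map_mul]

lemma Phi_add (F G : LaurentPolynomial ℚ) (P : Polynomial ℚ) :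
    Phi (F + G) P = Phi F P + Phi G P := by simp [map_add]

lemma Phi_sub (F G : LaurentPolynomial ℚ) (P : Polynomial ℚ) :
    Phi (F - G) P = Phi F P - Phi G P := by simp [map_sub]

lemma Phi_C (c : ℚ) (F : LaurentPolynomial ℚ) (P : Polynomial ℚ) :
    Phi (LaurentPolynomial.C c * F) P = c • Phi F P := by
  have h : (LaurentPolynomial.C c : LaurentPolynomial ℚ) = algebraMap ℚ _ c := rfl
  rw [h, Phi_mul]
  rw [AlgHom.commutes]
  simp [Algebra.algebraMap_eq_smul_one]


def aop : LaurentPolynomial ℚ := LaurentPolynomial.C (1/2 : ℚ) * (T 1 - T (-1))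
def bop : LaurentPolynomial ℚ := LaurentPolynomial.C (1/2 : ℚ) * (T 1 + T (-1)) - 1
def dop : LaurentPolynomial ℚ := T 1 - 1
def eop : LaurentPolynomial ℚ := LaurentPolynomial.C (1/2 : ℚ) * (dop * dop)

lemma hTT : (T (-1) : LaurentPolynomial ℚ) * T 1 = 1 := by
  rw [← T_add]; norm_num

lemma h2 : (LaurentPolynomial.C (1/2 : ℚ)) * 2 = 1 := by
  have : (2 : LaurentPolynomial ℚ) = LaurentPolynomial.C 2 := by
    simp [map_ofNat]
  rw [this, ← map_mul]
  norm_num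

lemma lem_T1 : (T 1 : LaurentPolynomial ℚ) = 1 + aop + bop := by
  unfold aop bop
  linear_combination (-(T 1) : LaurentPolynomial ℚ) * h2

lemma lem_Tm1 : (T (-1) : LaurentPolynomial ℚ) = 1 - aop + bop := by
  unfold aop bop
  linear_combination (-(T (-1)) : LaurentPolynomial ℚ) * h2

lemma lem_d : dop = aop + bop := by
  unfold dop
  linear_combination lem_T1

lemma lem_e : eop = aop^2 + aop*bop - bop := by
  unfold aop bop eop dop
  linear_combination (LaurentPolynomial.C (1/2:ℚ)) * hTT + (1 + LaurentPolynomial.C (1/2:ℚ) * T (-1) * T 1 - LaurentPolynomial.C (1/2:ℚ) * T 1^2) * h2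

lemma lem_a : aop = T (-1) * (eop + dop) := by
  unfold aop eop dop
  linear_combination (-(LaurentPolynomial.C (1/2:ℚ) * T 1)) * hTT + (T (-1) * (T 1 - 1)) * h2

lemma lem_b : bop = T (-1) * eop := by
  unfold bop eop dop
  linear_combination (LaurentPolynomial.C (1/2:ℚ) * (2 - T 1)) * hTT + h2


def mop : Fin 3 → LaurentPolynomial ℚ := ![1, aop, bop]

def lprod (l : List (Fin 3)) : LaurentPolynomial ℚ := (l.map mop).prod

lemma lprod_nil : lprod [] = 1 := rfl

lemma lprod_cons (c : Fin 3) (l : List (Fin 3)) : lprod (c :: l) = mop c * lprod l := by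
  simp [lprod]

lemma mop_zero : mop 0 = 1 := rfl
lemma mop_one : mop 1 = aop := rfl
lemma mop_two : mop 2 = bop := rfl

def CritP (P : Polynomial ℚ) : Prop :=
  ∀ l : List (Fin 3), ∃ z : ℤ, ((Phi (lprod l)) P).eval 0 = (z : ℚ)

lemma eval_Phi_T_mul (n : ℤ) (F : LaurentPolynomial ℚ) (P : Polynomial ℚ) :
    ((Phi (T n * F)) P).eval 0 = ((Phi F) P).eval (n : ℚ) := by
  rw [Phi_mul, Phi_T, Polynomial.eval_comp]
  simp

lemma crit_T {P : Polynomial ℚ} (hP : CritP P) :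
    ∀ (n : ℤ) (l : List (Fin 3)), ∃ z : ℤ, ((Phi (T n * lprod l)) P).eval 0 = (z : ℚ) := by
  intro n
  induction n using Int.induction_on with
  | zero =>
    intro l
    rw [show ((0:ℤ)) = 0 from rfl, T_zero, one_mul]
    exact hP l
  | succ n ih =>
    intro l
    have key : T ((n:ℤ)+1) * lprod l
        = T (n:ℤ) * lprod l + T (n:ℤ) * lprod (1 :: l) + T (n:ℤ) * lprod (2 :: l) := by
      rw [T_add, lem_T1, lprod_cons, lprod_cons]
      unfold mop
      simp only [Matrix.cons_val_one, Matrix.head_cons, Matrix.cons_val_two, Matrix.tail_cons, Matrix.cons_val_zero]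
      ring
    rw [key]
    obtain ⟨z1, h1⟩ := ih l
    obtain ⟨z2, h2⟩ := ih (1 :: l)
    obtain ⟨z3, h3⟩ := ih (2 :: l)
    refine ⟨z1 + z2 + z3, ?_⟩
    rw [Phi_add, Phi_add, Polynomial.eval_add, Polynomial.eval_add, h1, h2, h3]
    push_cast; try ring
  | pred n ih =>
    intro l
    have key : T (-(n:ℤ)-1) * lprod l
        = T (-(n:ℤ)) * lprod l - T (-(n:ℤ)) * lprod (1 :: l) + T (-(n:ℤ)) * lprod (2 :: l) := by
      rw [show (-(n:ℤ)-1) = (-(n:ℤ)) + (-1) from by ring, T_add, lem_Tm1, lprod_cons, lprod_cons]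
      unfold mop
      simp only [Matrix.cons_val_one, Matrix.head_cons, Matrix.cons_val_two, Matrix.tail_cons, Matrix.cons_val_zero]
      ring
    rw [key]
    obtain ⟨z1, h1⟩ := ih l
    obtain ⟨z2, h2⟩ := ih (1 :: l)
    obtain ⟨z3, h3⟩ := ih (2 :: l)
    refine ⟨z1 - z2 + z3, ?_⟩
    rw [Phi_add, Phi_sub, Polynomial.eval_add, Polynomial.eval_sub, h1, h2, h3]
    push_cast; try ring

lemma Phi_dop (P : Polynomial ℚ) : Phi dop P = deltaOp P := by
  rw [dop, Phi_sub, Phi_T, Phi_one, deltaOp]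
  norm_num

lemma Phi_eop (P : Polynomial ℚ) : Phi eop P = (1/2 : ℚ) • deltaOp (deltaOp P) := by
  rw [eop, Phi_C, Phi_mul, Phi_dop, Phi_dop]

lemma critP_int {P : Polynomial ℚ} (hP : CritP P) : ∀ m : ℤ, ∃ k : ℤ, P.eval (m : ℚ) = (k : ℚ) := by
  intro m
  obtain ⟨z, hz⟩ := crit_T hP m []
  refine ⟨z, ?_⟩
  rw [← hz, lprod_nil, eval_Phi_T_mul, Phi_one]

lemma critP_delta {P : Polynomial ℚ} (hP : CritP P) : CritP (deltaOp P) := by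
  intro l
  rw [← Phi_dop, ← Phi_mul]
  have key : lprod l * dop = lprod (1 :: l) + lprod (2 :: l) := by
    rw [lem_d, lprod_cons, lprod_cons]
    unfold mop
    simp only [Matrix.cons_val_one, Matrix.head_cons, Matrix.cons_val_two, Matrix.tail_cons, Matrix.cons_val_zero]
    ring
  rw [key, Phi_add, Polynomial.eval_add]
  obtain ⟨z1, h1⟩ := hP (1 :: l)
  obtain ⟨z2, h2⟩ := hP (2 :: l)
  exact ⟨z1 + z2, by rw [h1, h2]; push_cast; try ring⟩

lemma critP_half_dd {P : Polynomial ℚ} (hP : CritP P) :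
    CritP ((1/2 : ℚ) • deltaOp (deltaOp P)) := by
  intro l
  rw [← Phi_eop, ← Phi_mul]
  have key : lprod l * eop = lprod (1 :: 1 :: l) + lprod (1 :: 2 :: l) - lprod (2 :: l) := by
    rw [lem_e]
    simp only [lprod_cons]
    unfold mop
    simp only [Matrix.cons_val_one, Matrix.head_cons, Matrix.cons_val_two, Matrix.tail_cons, Matrix.cons_val_zero]
    ring
  rw [key, Phi_sub, Phi_add, Polynomial.eval_sub, Polynomial.eval_add]
  obtain ⟨z1, h1⟩ := hP (1 :: 1 :: l)
  obtain ⟨z2, h2⟩ := hP (1 :: 2 :: l)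
  obtain ⟨z3, h3⟩ := hP (2 :: l)
  exact ⟨z1 + z2 - z3, by rw [h1, h2, h3]; push_cast; try ring⟩

lemma critP_of {P : Polynomial ℚ}
    (h1 : ∀ m : ℤ, ∃ k : ℤ, P.eval (m : ℚ) = (k : ℚ))
    (h2 : CritP (deltaOp P))
    (h3 : CritP ((1/2 : ℚ) • deltaOp (deltaOp P))) : CritP P := by
  have h2' : CritP (Phi dop P) := by rwa [Phi_dop]
  have h3' : CritP (Phi eop P) := by rwa [Phi_eop]
  intro l
  induction l with
  | nil =>
    obtain ⟨k, hk⟩ := h1 0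
    refine ⟨k, ?_⟩
    rw [lprod_nil, Phi_one]
    simpa using hk
  | cons c l ih =>
    fin_cases c
    · rw [lprod_cons]
      show ∃ z : ℤ, ((Phi (mop 0 * lprod l)) P).eval 0 = (z:ℚ)
      have : mop 0 = 1 := rfl
      rw [this, one_mul]
      exact ih
    · rw [lprod_cons]
      show ∃ z : ℤ, ((Phi (mop 1 * lprod l)) P).eval 0 = (z:ℚ)
      have key : mop 1 * lprod l
          = T (-1) * lprod l * eop + T (-1) * lprod l * dop := by
        show aop * lprod l = _
        rw [lem_a]; ring
      rw [key, Phi_add, Polynomial.eval_add, Phi_mul (T (-1) * lprod l) eop,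
        Phi_mul (T (-1) * lprod l) dop]
      obtain ⟨z1, hz1⟩ := crit_T h3' (-1) l
      obtain ⟨z2, hz2⟩ := crit_T h2' (-1) l
      exact ⟨z1 + z2, by rw [hz1, hz2]; push_cast; try ring⟩
    · rw [lprod_cons]
      show ∃ z : ℤ, ((Phi (mop 2 * lprod l)) P).eval 0 = (z:ℚ)
      have key : mop 2 * lprod l = T (-1) * lprod l * eop := by
        show bop * lprod l = _
        rw [lem_b]; ring
      rw [key, Phi_mul (T (-1) * lprod l) eop]
      obtain ⟨z1, hz1⟩ := crit_T h3' (-1) l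
      exact ⟨z1, hz1⟩

section SV

variable {A : Type*} [CommRing A] [Algebra ℚ A]

/-- the universal single-sign expansion. -/
lemma sv (τ ξ : A) (hξ : ξ^3 = ξ) (P : Polynomial ℚ) :
    Polynomial.aeval (τ + ξ) P =
      Polynomial.aeval τ P + ξ * Polynomial.aeval τ (Phi aop P)
        + ξ^2 * Polynomial.aeval τ (Phi bop P) := by
  classical
  let t : Polynomial (Polynomial ℚ) := Polynomial.C Polynomial.X
  let x : Polynomial (Polynomial ℚ) := Polynomial.X
  let g : Polynomial (Polynomial ℚ) := Polynomial.aeval (t + x) P - Polynomial.C P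
      - x * Polynomial.C (Phi aop P) - x^2 * Polynomial.C (Phi bop P)
  let ψ : Polynomial ℚ → (Polynomial (Polynomial ℚ) →ₐ[ℚ] Polynomial ℚ) :=
    fun c => (Polynomial.aeval c).restrictScalars ℚ
  have hψX : ∀ c : Polynomial ℚ, ψ c x = c := fun c => Polynomial.aeval_X c
  have hψC : ∀ (c p : Polynomial ℚ), ψ c (Polynomial.C p) = p := fun c p => by
    show (Polynomial.aeval c) (Polynomial.C p) = p
    rw [Polynomial.aeval_C]; simp
  have hψaeval : ∀ c : Polynomial ℚ, ψ c (Polynomial.aeval (t + x) P)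
      = Polynomial.aeval (Polynomial.X + c) P := fun c => by
    rw [← Polynomial.aeval_algHom_apply]
    congr 1
    rw [map_add, hψX, hψC]
  have hg : ∀ c : Polynomial ℚ, ψ c g = Polynomial.aeval (Polynomial.X + c) P - P
      - c * (Phi aop P) - c^2 * (Phi bop P) := fun c => by
    simp only [g, map_sub, map_mul, map_pow, hψaeval, hψC, hψX]
  have hcomp : ∀ n : ℤ, Polynomial.aeval (Polynomial.X + Polynomial.C (n : ℚ)) P
      = Phi (T n) P := fun n => by rw [Phi_T, Polynomial.comp_eq_aeval]
  have hcomp1 : Polynomial.aeval (Polynomial.X + (1 : Polynomial ℚ)) P = Phi (T 1) P := by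
    have := hcomp 1
    rwa [show (Polynomial.C ((1:ℤ):ℚ) : Polynomial ℚ) = 1 from by norm_num] at this
  have hcompm1 : Polynomial.aeval (Polynomial.X + (-1 : Polynomial ℚ)) P = Phi (T (-1)) P := by
    have := hcomp (-1)
    rwa [show (Polynomial.C ((-1:ℤ):ℚ) : Polynomial ℚ) = -1 from by norm_num] at this
  have r0 : g.IsRoot 0 := by
    rw [Polynomial.IsRoot, ← Polynomial.coe_aeval_eq_eval]
    show ψ 0 g = 0
    rw [hg 0]
    simp only [add_zero, Polynomial.aeval_X_left_apply]
    ring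
  have r1 : g.IsRoot 1 := by
    rw [Polynomial.IsRoot, ← Polynomial.coe_aeval_eq_eval]
    show ψ 1 g = 0
    rw [hg 1, hcomp1, lem_T1, Phi_add, Phi_add, Phi_one]
    ring
  have rm1 : g.IsRoot (-1) := by
    rw [Polynomial.IsRoot, ← Polynomial.coe_aeval_eq_eval]
    show ψ (-1) g = 0
    rw [hg (-1), hcompm1, lem_Tm1, Phi_add, Phi_sub, Phi_one]
    ring
  obtain ⟨g1, hg1⟩ := (Polynomial.dvd_iff_isRoot).2 r0
  have r1' : g1.IsRoot 1 := by
    have := r1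
    rw [hg1, Polynomial.IsRoot, Polynomial.eval_mul] at this
    simpa using this
  obtain ⟨g2, hg2⟩ := (Polynomial.dvd_iff_isRoot).2 r1'
  have rm1' : g2.IsRoot (-1) := by
    have := rm1
    rw [hg1, hg2, Polynomial.IsRoot, Polynomial.eval_mul, Polynomial.eval_mul] at this
    simp only [Polynomial.eval_sub, Polynomial.eval_X, Polynomial.eval_C] at this
    rcases mul_eq_zero.1 this with h | h
    · exfalso; norm_num at h
    · rcases mul_eq_zero.1 h with h' | h'
      · exfalso; norm_num at h'
      · exact h'
  obtain ⟨g3, hg3⟩ := (Polynomial.dvd_iff_isRoot).2 rm1'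
  let θ : Polynomial (Polynomial ℚ) →ₐ[ℚ] A :=
    Polynomial.aevalTower (Polynomial.aeval τ) ξ
  have hθX : θ x = ξ := Polynomial.aevalTower_X _ _
  have hθC : ∀ p : Polynomial ℚ, θ (Polynomial.C p) = Polynomial.aeval τ p := fun p =>
    Polynomial.aevalTower_C _ _ _
  have hθaeval : θ (Polynomial.aeval (t + x) P) = Polynomial.aeval (τ + ξ) P := by
    rw [← Polynomial.aeval_algHom_apply]
    congr 1
    rw [map_add, hθX, hθC]
    rw [Polynomial.aeval_X]
  have hθg : θ g = 0 := by
    have hfac : g = (x - Polynomial.C 0) * ((x - Polynomial.C 1) * ((x - Polynomial.C (-1)) * g3)) := by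
      rw [hg1, hg2, hg3]
    rw [hfac]
    simp only [map_mul, map_sub, hθX]
    have e0 : θ (Polynomial.C (0 : Polynomial ℚ)) = 0 := by rw [hθC]; simp
    have e1 : θ (Polynomial.C (1 : Polynomial ℚ)) = 1 := by rw [hθC]; simp
    have em1 : θ (Polynomial.C (-1 : Polynomial ℚ)) = -1 := by rw [hθC]; simp
    rw [e0, e1, em1]
    have hre : (ξ - 0) * ((ξ - 1) * ((ξ - -1) * θ g3)) = (ξ^3 - ξ) * θ g3 := by ring
    rw [hre, hξ]
    ring
  have expand : θ g = Polynomial.aeval (τ + ξ) P - Polynomial.aeval τ P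
      - ξ * Polynomial.aeval τ (Phi aop P) - ξ^2 * Polynomial.aeval τ (Phi bop P) := by
    simp only [g, map_sub, map_mul, map_pow, hθaeval, hθC, hθX]
  rw [expand] at hθg
  linear_combination hθg

end SV

lemma gl : ∀ (s : ℕ) {A : Type} [CommRing A] [Algebra ℚ A] (ξ : Fin s → A)
    (hξ : ∀ i, ξ i ^ 3 = ξ i) (P : Polynomial ℚ),
    Polynomial.aeval (∑ i, ξ i) P =
      ∑ α : Fin s → Fin 3, ((Phi (∏ i, mop (α i))) P).eval 0 • ∏ i, ξ i ^ ((α i : ℕ)) := by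
  intro s
  induction s with
  | zero =>
    intro A _ _ ξ hξ P
    have h2 : ∀ α : Fin 0 → Fin 3,
        ((Phi (∏ i, mop (α i))) P).eval 0 • ∏ i, ξ i ^ ((α i : ℕ))
          = (algebraMap ℚ A) (P.eval 0) := by
      intro α
      simp only [Finset.univ_eq_empty, Finset.prod_empty, Phi_one]
      rw [Algebra.smul_def, mul_one]
    rw [Finset.sum_congr rfl (fun α _ => h2 α), Finset.sum_const, Finset.card_univ,
      show Fintype.card (Fin 0 → Fin 3) = 1 from by simp, one_smul,
      show (∑ i : Fin 0, ξ i) = 0 from by simp,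
      show (0 : A) = (algebraMap ℚ A) 0 from by simp, Polynomial.aeval_algebraMap_apply]
    simp [Polynomial.coe_aeval_eq_eval]
  | succ s ih =>
    intro A _ _ ξ hξ P
    rw [Fin.sum_univ_succ, add_comm (ξ 0), sv _ (ξ 0) (hξ 0) P,
      ih (fun i => ξ i.succ) (fun i => hξ i.succ) P,
      ih (fun i => ξ i.succ) (fun i => hξ i.succ) (Phi aop P),
      ih (fun i => ξ i.succ) (fun i => hξ i.succ) (Phi bop P)]
    have key : (∑ α : Fin (s+1) → Fin 3, ((Phi (∏ i, mop (α i))) P).eval 0 • ∏ i, ξ i ^ ((α i : ℕ)))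
        = (∑ α : Fin s → Fin 3, ((Phi (∏ i, mop (α i))) P).eval 0 • ∏ i, (ξ i.succ) ^ ((α i : ℕ)))
          + ξ 0 * (∑ α : Fin s → Fin 3,
              ((Phi (∏ i, mop (α i))) (Phi aop P)).eval 0 • ∏ i, (ξ i.succ) ^ ((α i : ℕ)))
          + ξ 0 ^ 2 * (∑ α : Fin s → Fin 3,
              ((Phi (∏ i, mop (α i))) (Phi bop P)).eval 0 • ∏ i, (ξ i.succ) ^ ((α i : ℕ))) := by
      rw [← Equiv.sum_comp (Fin.consEquiv (fun _ : Fin (s+1) => Fin 3))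
        (fun α : Fin (s+1) → Fin 3 => ((Phi (∏ i, mop (α i))) P).eval 0 • ∏ i, ξ i ^ ((α i : ℕ)))]
      rw [Fintype.sum_prod_type, Fin.sum_univ_three, Finset.mul_sum, Finset.mul_sum]
      refine congrArg₂ (· + ·) (congrArg₂ (· + ·) ?_ ?_) ?_ <;>
        refine Finset.sum_congr rfl fun α _ => ?_ <;>
        · simp only [Fin.consEquiv_apply]
          rw [Fin.prod_univ_succ, Fin.prod_univ_succ]
          simp only [Fin.cons_zero, Fin.cons_succ]
          first
          | (rw [mop_zero, one_mul]
             norm_num)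
          | (rw [mop_one, mul_comm aop, Phi_mul]
             rw [mul_smul_comm]
             norm_num)
          | (rw [mop_two, mul_comm bop, Phi_mul]
             rw [mul_smul_comm]
             norm_num)
    rw [key]

lemma lprod_ofFn {s : ℕ} (α : Fin s → Fin 3) :
    lprod (List.ofFn α) = ∏ i, mop (α i) := by
  rw [lprod, List.map_ofFn, List.prod_ofFn]
  rfl

/-- The definition `PreservesSumsOfSigns`, stated here to use in the bridge. -/
def PresSS (P : Polynomial ℚ) : Prop :=
  ∀ s : ℕ, ∃ Q : MvPolynomial (Fin s) ℤ,
    Polynomial.aeval (∑ i : Fin s, MvPolynomial.X i) P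
        - MvPolynomial.map (Int.castRingHom ℚ) Q ∈
      Ideal.span (Set.range fun i : Fin s => MvPolynomial.X i ^ 3 - MvPolynomial.X i)

lemma pres_of_crit {P : Polynomial ℚ} (hP : CritP P) : PresSS P := by
  intro s
  classical
  set I : Ideal (MvPolynomial (Fin s) ℚ) :=
    Ideal.span (Set.range fun i : Fin s => MvPolynomial.X i ^ 3 - MvPolynomial.X i) with hI
  have hchoice : ∀ α : Fin s → Fin 3, ∃ zz : ℤ,
      ((Phi (∏ i, mop (α i))) P).eval 0 = (zz : ℚ) := by
    intro α
    obtain ⟨zz, hzz⟩ := hP (List.ofFn α)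
    exact ⟨zz, by rwa [lprod_ofFn] at hzz⟩
  choose z hz using hchoice
  refine ⟨∑ α : Fin s → Fin 3, MvPolynomial.C (z α) * ∏ i, (MvPolynomial.X i) ^ ((α i : ℕ)), ?_⟩
  refine (Ideal.Quotient.eq).mp ?_
  have hxi : ∀ i : Fin s, (Ideal.Quotient.mk I (MvPolynomial.X i))^3
      = Ideal.Quotient.mk I (MvPolynomial.X i) := by
    intro i
    have hmem : (MvPolynomial.X i ^ 3 - MvPolynomial.X i : MvPolynomial (Fin s) ℚ) ∈ I :=
      Ideal.subset_span ⟨i, rfl⟩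
    have h0 := (Ideal.Quotient.eq_zero_iff_mem).2 hmem
    rw [map_sub, map_pow, sub_eq_zero] at h0
    exact h0
  have hglq := gl s (fun i => Ideal.Quotient.mk I (MvPolynomial.X i)) hxi P
  have hmk : Ideal.Quotient.mk I (Polynomial.aeval (∑ i : Fin s, MvPolynomial.X i) P)
      = Polynomial.aeval (∑ i : Fin s, Ideal.Quotient.mk I (MvPolynomial.X i)) P := by
    rw [show (∑ i : Fin s, Ideal.Quotient.mk I (MvPolynomial.X i))
        = (Ideal.Quotient.mkₐ ℚ I) (∑ i : Fin s, MvPolynomial.X i) from by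
      rw [map_sum]; rfl]
    rw [Polynomial.aeval_algHom_apply]
    rfl
  have hmapQ : MvPolynomial.map (Int.castRingHom ℚ)
      (∑ α : Fin s → Fin 3, MvPolynomial.C (z α) * ∏ i, (MvPolynomial.X i) ^ ((α i : ℕ)))
      = ∑ α : Fin s → Fin 3, MvPolynomial.C ((z α : ℚ)) * ∏ i, (MvPolynomial.X i) ^ ((α i : ℕ)) := by
    rw [map_sum]
    refine Finset.sum_congr rfl fun α _ => ?_
    rw [map_mul, MvPolynomial.map_C, map_prod]
    simp [MvPolynomial.map_X]
  rw [hmk, hglq, hmapQ, map_sum]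
  refine Finset.sum_congr rfl fun α _ => ?_
  conv_rhs => rw [map_mul, map_prod]
  conv_rhs => simp only [map_pow]
  rw [show (Ideal.Quotient.mk I) (MvPolynomial.C ((z α : ℚ)))
      = algebraMap ℚ (MvPolynomial (Fin s) ℚ ⧸ I) ((z α : ℚ)) from rfl]
  rw [← Algebra.smul_def, hz α]

def valz (e : Fin 3) : ℤ := if e = 0 then 0 else if e = 1 then 1 else -1

def wq (a e : Fin 3) : ℚ :=
  if a = 0 then (if e = 0 then 1 else 0)
  else if a = 1 then (if e = 0 then 0 else if e = 1 then 1/2 else -1/2)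
  else (if e = 0 then -1 else if e = 1 then 1/2 else 1/2)

lemma valz0 : valz 0 = 0 := rfl
lemma valz1 : valz 1 = 1 := rfl
lemma valz2 : valz 2 = -1 := rfl
lemma wq00 : wq 0 0 = 1 := rfl
lemma wq01 : wq 0 1 = 0 := rfl
lemma wq02 : wq 0 2 = 0 := rfl
lemma wq10 : wq 1 0 = 0 := rfl
lemma wq11 : wq 1 1 = 1/2 := rfl
lemma wq12 : wq 1 2 = -1/2 := rfl
lemma wq20 : wq 2 0 = -1 := rfl
lemma wq21 : wq 2 1 = 1/2 := rfl
lemma wq22 : wq 2 2 = 1/2 := rfl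

lemma eval_Phi_aop (P : Polynomial ℚ) (t : ℚ) :
    (Phi aop P).eval t = (P.eval (t+1) - P.eval (t-1))/2 := by
  rw [aop, Phi_C, Phi_sub, Phi_T, Phi_T]
  simp [Polynomial.eval_comp]
  ring

lemma eval_Phi_bop (P : Polynomial ℚ) (t : ℚ) :
    (Phi bop P).eval t = (P.eval (t+1) + P.eval (t-1))/2 - P.eval t := by
  rw [bop, Phi_sub, Phi_C, Phi_add, Phi_T, Phi_T, Phi_one]
  simp [Polynomial.eval_comp]
  ring

lemma single_sum_zero (P : Polynomial ℚ) (t : ℚ) :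
    (∑ e : Fin 3, wq 0 e * P.eval (t + (valz e : ℚ))) = ((Phi (mop 0)) P).eval t := by
  rw [Fin.sum_univ_three, mop_zero, Phi_one, wq00, wq01, wq02, valz0]
  norm_num

lemma single_sum_one (P : Polynomial ℚ) (t : ℚ) :
    (∑ e : Fin 3, wq 1 e * P.eval (t + (valz e : ℚ))) = ((Phi (mop 1)) P).eval t := by
  rw [Fin.sum_univ_three, mop_one, eval_Phi_aop, wq10, wq11, wq12, valz0, valz1, valz2]
  push_cast
  rw [show t + -1 = t - 1 from by ring]
  ring

lemma single_sum_two (P : Polynomial ℚ) (t : ℚ) :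
    (∑ e : Fin 3, wq 2 e * P.eval (t + (valz e : ℚ))) = ((Phi (mop 2)) P).eval t := by
  rw [Fin.sum_univ_three, mop_two, eval_Phi_bop, wq20, wq21, wq22, valz0, valz1, valz2]
  push_cast
  rw [show t + -1 = t - 1 from by ring]
  ring

lemma single_sum (a : Fin 3) (P : Polynomial ℚ) (t : ℚ) :
    (∑ e : Fin 3, wq a e * P.eval (t + (valz e : ℚ))) = ((Phi (mop a)) P).eval t := by
  fin_cases a
  · exact single_sum_zero P t
  · exact single_sum_one P t
  · exact single_sum_two P t

lemma intw_zero (β : ℕ) :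
    ∃ k : ℤ, (∑ e : Fin 3, wq 0 e * ((valz e : ℚ))^β) = (k : ℚ) := by
  rw [Fin.sum_univ_three, wq00, wq01, wq02, valz0]
  match β with
  | 0 => exact ⟨1, by norm_num⟩
  | (β+1) => exact ⟨0, by norm_num [zero_pow]⟩

lemma intw_one (β : ℕ) :
    ∃ k : ℤ, (∑ e : Fin 3, wq 1 e * ((valz e : ℚ))^β) = (k : ℚ) := by
  rw [Fin.sum_univ_three, wq10, wq11, wq12, valz0, valz1, valz2]
  push_cast
  rcases Nat.even_or_odd β with h | h
  · exact ⟨0, by rw [h.neg_one_pow]; norm_num⟩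
  · exact ⟨1, by rw [h.neg_one_pow]; norm_num⟩

lemma intw_two (β : ℕ) :
    ∃ k : ℤ, (∑ e : Fin 3, wq 2 e * ((valz e : ℚ))^β) = (k : ℚ) := by
  rw [Fin.sum_univ_three, wq20, wq21, wq22, valz0, valz1, valz2]
  push_cast
  match β with
  | 0 => exact ⟨0, by norm_num⟩
  | (β+1) =>
    rcases Nat.even_or_odd (β+1) with h | h
    · exact ⟨1, by rw [h.neg_one_pow, zero_pow (by omega)]; norm_num⟩
    · exact ⟨0, by rw [h.neg_one_pow, zero_pow (by omega)]; norm_num⟩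

lemma intw (a : Fin 3) (β : ℕ) :
    ∃ k : ℤ, (∑ e : Fin 3, wq a e * ((valz e : ℚ))^β) = (k : ℚ) := by
  fin_cases a
  · exact intw_zero β
  · exact intw_one β
  · exact intw_two β

lemma fl : ∀ (s : ℕ) (α : Fin s → Fin 3) (P : Polynomial ℚ),
    (∑ ε : Fin s → Fin 3, (∏ i, wq (α i) (ε i)) * P.eval (∑ i, ((valz (ε i) : ℚ))))
      = ((Phi (∏ i, mop (α i))) P).eval 0 := by
  intro s
  induction s with
  | zero =>
    intro α P
    have h2 : ∀ ε : Fin 0 → Fin 3,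
        (∏ i, wq (α i) (ε i)) * P.eval (∑ i, ((valz (ε i) : ℚ))) = P.eval 0 := by
      intro ε
      simp
    rw [Finset.sum_congr rfl (fun ε _ => h2 ε), Finset.sum_const, Finset.card_univ,
      show Fintype.card (Fin 0 → Fin 3) = 1 from by simp, one_smul]
    simp [Phi_one]
  | succ s ih =>
    intro α P
    rw [← Equiv.sum_comp (Fin.consEquiv (fun _ : Fin (s+1) => Fin 3))
      (fun ε : Fin (s+1) → Fin 3 => (∏ i, wq (α i) (ε i)) * P.eval (∑ i, ((valz (ε i) : ℚ))))]
    rw [Fintype.sum_prod_type]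
    simp only [Fin.consEquiv_apply]
    have hterm : ∀ (e : Fin 3) (ε : Fin s → Fin 3),
        (∏ i, wq (α i) ((Fin.cons e ε : ∀ _ : Fin (s+1), Fin 3) i)) * P.eval (∑ i, ((valz ((Fin.cons e ε : ∀ _ : Fin (s+1), Fin 3) i) : ℚ)))
        = wq (α 0) e * ((∏ i : Fin s, wq (α i.succ) (ε i))
            * (Phi (T (valz e)) P).eval (∑ i, ((valz (ε i) : ℚ)))) := by
      intro e ε
      rw [Fin.prod_univ_succ, Fin.sum_univ_succ]
      simp only [Fin.cons_zero, Fin.cons_succ]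
      rw [Phi_T, Polynomial.eval_comp]
      simp only [Polynomial.eval_add, Polynomial.eval_X, Polynomial.eval_C]
      rw [show (∑ i : Fin s, ((valz (ε i) : ℚ))) + (valz e : ℚ)
          = (valz e : ℚ) + ∑ i : Fin s, ((valz (ε i) : ℚ)) from by ring]
      ring
    have hstep : ∀ e : Fin 3,
        (∑ ε : Fin s → Fin 3,
          (∏ i, wq (α i) ((Fin.cons e ε : ∀ _ : Fin (s+1), Fin 3) i)) * P.eval (∑ i, ((valz ((Fin.cons e ε : ∀ _ : Fin (s+1), Fin 3) i) : ℚ))))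
        = wq (α 0) e * ((Phi (∏ i : Fin s, mop (α i.succ))) P).eval (0 + (valz e : ℚ)) := by
      intro e
      rw [Finset.sum_congr rfl (fun ε _ => hterm e ε), ← Finset.mul_sum]
      congr 1
      rw [ih (fun i => α i.succ) (Phi (T (valz e)) P), ← Phi_mul, mul_comm, Phi_mul]
      rw [Phi_T, Polynomial.eval_comp]
      simp
    rw [Finset.sum_congr rfl (fun e _ => hstep e)]
    rw [single_sum (α 0) ((Phi (∏ i : Fin s, mop (α i.succ))) P) 0, ← Phi_mul,
      show (mop (α 0) * ∏ i : Fin s, mop (α i.succ)) = ∏ i : Fin (s+1), mop (α i) from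
        (Fin.prod_univ_succ (fun i => mop (α i))).symm]

lemma aeval_eq_evalq {n : ℕ} (pts : Fin n → ℚ) (y : MvPolynomial (Fin n) ℚ) :
    MvPolynomial.aeval pts y = MvPolynomial.eval pts y := by
  rw [MvPolynomial.aeval_def, MvPolynomial.eval, MvPolynomial.coe_eval₂Hom, Algebra.algebraMap_self]

lemma intQ {s : ℕ} (α : Fin s → Fin 3) (Q : MvPolynomial (Fin s) ℤ) :
    ∃ k : ℤ, (∑ ε : Fin s → Fin 3, (∏ i, wq (α i) (ε i))
        * ((MvPolynomial.eval (fun i => valz (ε i)) Q : ℤ) : ℚ)) = (k : ℚ) := by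
  induction Q using MvPolynomial.induction_on' with
  | monomial u a =>
    have hev : ∀ ε : Fin s → Fin 3,
        (∏ i, wq (α i) (ε i)) *
          ((MvPolynomial.eval (fun i => valz (ε i)) (MvPolynomial.monomial u a) : ℤ) : ℚ)
        = (a : ℚ) * ∏ i, (wq (α i) (ε i) * ((valz (ε i) : ℚ))^(u i)) := by
      intro ε
      rw [MvPolynomial.eval_monomial, Finsupp.prod_fintype _ _ (fun i => pow_zero _)]
      rw [Finset.prod_mul_distrib]
      push_cast
      ring
    rw [Finset.sum_congr rfl (fun ε _ => hev ε), ← Finset.mul_sum]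
    have hswap : (∑ ε : Fin s → Fin 3, ∏ i, (wq (α i) (ε i) * ((valz (ε i) : ℚ))^(u i)))
        = ∏ i, (∑ e : Fin 3, wq (α i) e * ((valz e : ℚ))^(u i)) := by
      rw [Finset.prod_univ_sum (fun _ => (Finset.univ : Finset (Fin 3)))
        (fun i e => wq (α i) e * ((valz e : ℚ))^(u i)), Fintype.piFinset_univ]
    rw [hswap]
    choose k hk using fun i => intw (α i) (u i)
    refine ⟨a * ∏ i, k i, ?_⟩
    rw [Finset.prod_congr rfl (fun i _ => hk i)]
    push_cast
    ring
  | add p q hp hq =>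
    obtain ⟨kp, hkp⟩ := hp
    obtain ⟨kq, hkq⟩ := hq
    have hsplit : ∀ ε : Fin s → Fin 3,
        (∏ i, wq (α i) (ε i)) * ((MvPolynomial.eval (fun i => valz (ε i)) (p + q) : ℤ) : ℚ)
        = (∏ i, wq (α i) (ε i)) * ((MvPolynomial.eval (fun i => valz (ε i)) p : ℤ) : ℚ)
          + (∏ i, wq (α i) (ε i)) * ((MvPolynomial.eval (fun i => valz (ε i)) q : ℤ) : ℚ) := by
      intro ε
      rw [map_add]
      push_cast
      ring
    refine ⟨kp + kq, ?_⟩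
    rw [Finset.sum_congr rfl (fun ε _ => hsplit ε), Finset.sum_add_distrib, hkp, hkq]
    push_cast
    ring

lemma crit_of_pres {P : Polynomial ℚ} (hP : PresSS P) : CritP P := by
  intro l
  obtain ⟨Q, hQ⟩ := hP l.length
  set α : Fin l.length → Fin 3 := l.get with hα
  have hlp : lprod l = ∏ i, mop (α i) := by
    conv_lhs => rw [← List.ofFn_get l]
    rw [lprod_ofFn]
  have hev : ∀ ε : Fin l.length → Fin 3,
      P.eval (∑ i, ((valz (ε i) : ℚ)))
        = ((MvPolynomial.eval (fun i => valz (ε i)) Q : ℤ) : ℚ) := by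
    intro ε
    have hker : (MvPolynomial.aeval (fun i => ((valz (ε i) : ℚ))) :
        MvPolynomial (Fin l.length) ℚ →ₐ[ℚ] ℚ)
        (Polynomial.aeval (∑ i : Fin l.length, MvPolynomial.X i) P
          - MvPolynomial.map (Int.castRingHom ℚ) Q) = 0 := by
      have hle : Ideal.span (Set.range fun i : Fin l.length =>
          (MvPolynomial.X i)^3 - MvPolynomial.X i)
          ≤ RingHom.ker ((MvPolynomial.aeval (fun i => ((valz (ε i) : ℚ)))) :
              MvPolynomial (Fin l.length) ℚ →ₐ[ℚ] ℚ).toRingHom := by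
        rw [Ideal.span_le]
        rintro y ⟨i, rfl⟩
        simp only [SetLike.mem_coe, RingHom.mem_ker, AlgHom.toRingHom_eq_coe,
          RingHom.coe_coe, map_sub, map_pow, MvPolynomial.aeval_X]
        have h3' : ∀ e : Fin 3, (valz e)^3 = valz e := by decide
        have h3 : ((valz (ε i) : ℚ))^3 = ((valz (ε i) : ℚ)) := by
          exact_mod_cast congrArg (fun z : ℤ => (z : ℚ)) (h3' (ε i))
        rw [h3, sub_self]
      exact hle hQ
    rw [map_sub, sub_eq_zero] at hker
    have h1 : (MvPolynomial.aeval (fun i => ((valz (ε i) : ℚ))) :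
        MvPolynomial (Fin l.length) ℚ →ₐ[ℚ] ℚ)
        (Polynomial.aeval (∑ i : Fin l.length, MvPolynomial.X i) P)
        = P.eval (∑ i, ((valz (ε i) : ℚ))) := by
      rw [← Polynomial.aeval_algHom_apply]
      rw [map_sum]
      simp only [MvPolynomial.aeval_X]
      rw [Polynomial.coe_aeval_eq_eval]
    have h2 : (MvPolynomial.aeval (fun i => ((valz (ε i) : ℚ))) :
        MvPolynomial (Fin l.length) ℚ →ₐ[ℚ] ℚ)
        (MvPolynomial.map (Int.castRingHom ℚ) Q)
        = ((MvPolynomial.eval (fun i => valz (ε i)) Q : ℤ) : ℚ) := by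
      rw [aeval_eq_evalq, MvPolynomial.eval_map]
      have := MvPolynomial.eval₂_comp_left (Int.castRingHom ℚ) (RingHom.id ℤ)
        (fun i => valz (ε i)) Q
      rw [RingHomCompTriple.comp_eq] at this
      rw [show ((fun i => ((valz (ε i) : ℚ)))) = (⇑(Int.castRingHom ℚ) ∘ fun i => valz (ε i)) from rfl,
        ← this]
      congr 1
    rw [← h1, ← h2, hker]
  obtain ⟨k, hk⟩ := intQ α Q
  refine ⟨k, ?_⟩
  rw [hlp, ← fl l.length α P, Finset.sum_congr rfl (fun ε _ => by rw [hev ε])]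
  exact hk

end SignsAux


lemma presSS_iff (P : Polynomial ℚ) : PreservesSumsOfSigns P ↔ PresSS P := Iff.rfl

theorem preservesSumsOfSigns_iff_delta (P : Polynomial ℚ) :
    PreservesSumsOfSigns P ↔
      ((∀ m : ℤ, ∃ k : ℤ, P.eval (m : ℚ) = (k : ℚ)) ∧
        PreservesSumsOfSigns (deltaOp P) ∧
        PreservesSumsOfSigns ((1 / 2 : ℚ) • deltaOp (deltaOp P))) := by
  constructor
  · intro h
    have hc := crit_of_pres ((presSS_iff P).mp h)
    exact ⟨critP_int hc, (presSS_iff _).mpr (pres_of_crit (critP_delta hc)),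
      (presSS_iff _).mpr (pres_of_crit (critP_half_dd hc))⟩
  · rintro ⟨h1, h2, h3⟩
    exact (presSS_iff P).mpr (pres_of_crit (critP_of h1
      (crit_of_pres ((presSS_iff _).mp h2)) (crit_of_pres ((presSS_iff _).mp h3))))
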